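/- Let D be a probability distribution on a finite set X, f : X → {−1,1}, and for a classifier h : X → ℝ let E_h = {x : h(x)f(x) < 1} be its set of margin errors, assumed nonempty with D(E_h) > 0. Let D̄_h = D conditioned on E_h, and let h̄ : X → {−1,1} satisfy R_{D̄_h}(h̄) ≤ ε for some ε < 1/2, where R_P(g) = P({x : g(x) ≠ f(x)}). Then, viewing functions as vectors indexed by X, the gradient of the hinge risk R_D^hinge(h) = Σ_x max(1 − h(x)f(x), 0)·D(x) satisfies ⟨h̄, ∇_h R_D^hinge⟩ = −D(E_h)·⟨h̄, f ∘ D̄_h⟩ ≤ −D(E_h)(1 − 2ε) < 0; i.e., h̄ is a descent direction for the hinge risk. -/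

import Mathlib

open Classical in
/-- A model `h̄` built on the margin-error distribution of `h` is a descent direction
for the hinge risk: `⟨h̄, ∇ R^hinge⟩ = −D(E_h)·⟨h̄, f∘D̄_h⟩ ≤ −D(E_h)(1−2ε) < 0`. -/
theorem hinge_descent_direction {X : Type*} [Fintype X]
    (D : X → ℝ) (hDnn : ∀ x, 0 ≤ D x) (hDsum : ∑ x, D x = 1)
    (f : X → ℝ) (hf : ∀ x, f x = 1 ∨ f x = -1)
    (h : X → ℝ)
    (DE : ℝ) (hDE : DE = ∑ x ∈ Finset.univ.filter (fun x => h x * f x < 1), D x)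
    (hDEpos : 0 < DE)
    (Dbar : X → ℝ) (hDbar : ∀ x, Dbar x = if h x * f x < 1 then D x / DE else 0)
    (hbar : X → ℝ) (hbarpm : ∀ x, hbar x = 1 ∨ hbar x = -1)
    (ε : ℝ) (hε : ε < 1 / 2)
    (hrisk : ∑ x ∈ Finset.univ.filter (fun x => hbar x ≠ f x), Dbar x ≤ ε)
    (grad : X → ℝ) (hgrad : ∀ x, grad x = if h x * f x < 1 then -f x * D x else 0) :
    (∑ x, hbar x * grad x) = -DE * (∑ x, hbar x * (f x * Dbar x)) ∧
    (∑ x, hbar x * grad x) ≤ -DE * (1 - 2 * ε) ∧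
    (∑ x, hbar x * grad x) < 0 := by
  have hDEne : DE ≠ 0 := ne_of_gt hDEpos
  have key : ∀ x, hbar x * grad x = -DE * (hbar x * (f x * Dbar x)) := by
    intro x
    rw [hgrad, hDbar]
    split
    · field_simp
    · simp
  have eq1 : (∑ x, hbar x * grad x) = -DE * (∑ x, hbar x * (f x * Dbar x)) := by
    rw [Finset.mul_sum]
    exact Finset.sum_congr rfl fun x _ => key x
  -- Dbar sums to 1
  have hDbarsum : ∑ x, Dbar x = 1 := by
    have : ∑ x, Dbar x = ∑ x ∈ Finset.univ.filter (fun x => h x * f x < 1), D x / DE := by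
      rw [Finset.sum_filter]
      exact Finset.sum_congr rfl fun x _ => by rw [hDbar]
    rw [this, ← Finset.sum_div, ← hDE, div_self hDEne]
  have hDbarnn : ∀ x, 0 ≤ Dbar x := by
    intro x; rw [hDbar]; split
    · exact div_nonneg (hDnn x) (le_of_lt hDEpos)
    · exact le_refl 0
  -- split the inner product sum over agreement
  set R := ∑ x ∈ Finset.univ.filter (fun x => hbar x ≠ f x), Dbar x with hR
  have hS : (∑ x, hbar x * (f x * Dbar x)) = 1 - 2 * R := by
    have hsplit : (∑ x, Dbar x) =
        (∑ x ∈ Finset.univ.filter (fun x => hbar x ≠ f x), Dbar x) +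
        (∑ x ∈ Finset.univ.filter (fun x => ¬ hbar x ≠ f x), Dbar x) :=
      (Finset.sum_filter_add_sum_filter_not _ _ _).symm
    have hterm : ∀ x, hbar x * (f x * Dbar x) =
        (if hbar x ≠ f x then -Dbar x else Dbar x) := by
      intro x
      by_cases hxx : hbar x = f x
      · rw [if_neg (not_not_intro hxx), hxx]
        rcases hf x with hfx | hfx <;> rw [hfx] <;> ring
      · rw [if_pos hxx]
        rcases hf x with hfx | hfx <;> rcases hbarpm x with hbx | hbx
        · exact absurd (hbx.trans hfx.symm) hxx
        · rw [hbx, hfx]; ring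
        · rw [hbx, hfx]; ring
        · exact absurd (hbx.trans hfx.symm) hxx
    calc (∑ x, hbar x * (f x * Dbar x))
        = ∑ x, (if hbar x ≠ f x then -Dbar x else Dbar x) :=
          Finset.sum_congr rfl fun x _ => hterm x
      _ = (∑ x ∈ Finset.univ.filter (fun x => hbar x ≠ f x), -Dbar x) +
          (∑ x ∈ Finset.univ.filter (fun x => ¬ hbar x ≠ f x), Dbar x) := by
          rw [← Finset.sum_filter_add_sum_filter_not Finset.univ (fun x => hbar x ≠ f x)]
          congr 1
          · exact Finset.sum_congr rfl fun x hx => by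
              rw [if_pos (Finset.mem_filter.mp hx).2]
          · exact Finset.sum_congr rfl fun x hx => by
              rw [if_neg (Finset.mem_filter.mp hx).2]
      _ = 1 - 2 * R := by
          rw [Finset.sum_neg_distrib]
          have := hsplit
          rw [hDbarsum] at this
          rw [← hR]
          linarith
  have hSge : (∑ x, hbar x * (f x * Dbar x)) ≥ 1 - 2 * ε := by
    rw [hS]; linarith [hrisk]
  have h2 : (∑ x, hbar x * grad x) ≤ -DE * (1 - 2 * ε) := by
    rw [eq1]
    have := mul_le_mul_of_nonneg_left hSge (le_of_lt hDEpos)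
    nlinarith
  refine ⟨eq1, h2, lt_of_le_of_lt h2 ?_⟩
  have : 0 < 1 - 2 * ε := by linarith
  nlinarith
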